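/- Let σ² > 0, g ≥ 0, and let ℓ, Γ, a, T be reals with a ≥ ℓ·g and T ≥ a + Γσ². Define Γ̂ = (Γσ² + ℓ·g)/(σ² + g). Then T − Γ̂·g ≥ Γ̂·σ². -/
import Mathlib

/-- feasibility of the constructed point in eq. (33) of the paper:
if `σ² > 0`, `g ≥ 0`, `a ≥ ℓ g`, `T ≥ a + Γ σ²` and `Γ̂ = (Γσ² + ℓ g)/(σ² + g)`,
then `T − Γ̂ g ≥ Γ̂ σ²`. -/
theorem constructed_point_feasible (σ2 g ℓ Γ a T : ℝ)
    (hσ : 0 < σ2) (hg : 0 ≤ g) (ha : a ≥ ℓ * g) (hT : T ≥ a + Γ * σ2) :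
    T - ((Γ * σ2 + ℓ * g) / (σ2 + g)) * g ≥ ((Γ * σ2 + ℓ * g) / (σ2 + g)) * σ2 := by
  have hpos : 0 < σ2 + g := by linarith
  rw [ge_iff_le, ← sub_nonneg]
  have : T - ((Γ * σ2 + ℓ * g) / (σ2 + g)) * g - ((Γ * σ2 + ℓ * g) / (σ2 + g)) * σ2
      = T - (Γ * σ2 + ℓ * g) := by
    field_simp
    ring
  rw [this]
  linarith
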